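/- Let Φ be a reduced root system and M a ℤ-module. The coboundary operator on root-system cochains satisfies dⁿ⁺¹ ∘ dⁿ = 0 as a map Cⁿ(Φ,M) → Cⁿ⁺²(Φ,M), for every n ≥ 1. -/

import Mathlib

open scoped RealInnerProductSpace

/-- A reduced root system `Φ` in a real inner product space `V`:
a finite set of nonzero vectors spanning `V`, closed under the reflections it determines,
with integral Cartan numbers, such that the only multiples of a root in `Φ` are `±α`. -/
structure ReducedRootSystem (V : Type) [NormedAddCommGroup V] [InnerProductSpace ℝ V] :
    Type where
  roots : Set V
  finite : roots.Finite
  nonzero : ∀ α ∈ roots, α ≠ 0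
  spans : Submodule.span ℝ roots = ⊤
  reflect_mem : ∀ α ∈ roots, ∀ β ∈ roots, β - (2 * ⟪β, α⟫ / ⟪α, α⟫) • α ∈ roots
  integral : ∀ α ∈ roots, ∀ β ∈ roots, ∃ n : ℤ, 2 * ⟪β, α⟫ / ⟪α, α⟫ = (n : ℝ)
  reduced : ∀ α ∈ roots, ∀ t : ℝ, t • α ∈ roots → t = 1 ∨ t = -1

variable {V : Type} [NormedAddCommGroup V] [InnerProductSpace ℝ V]

/-- `Φ₀ = Φ ∪ {0}`. -/
def rootsZero (Φ : ReducedRootSystem V) : Set V := insert 0 Φ.roots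

/-- Contraction of a tuple at position `j` (adding the `j`-th and `(j+1)`-st entries). -/
def contractAt (l : List V) (j : ℕ) : List V :=
  l.take j ++ (l.getD j 0 + l.getD (j + 1) 0) :: l.drop (j + 2)

/-- `IsRootChainAux Φ n l`: the tuple `l` of length `n` is a generator of `T_n(Φ)`:
`T₁(Φ) = Φ₀`, and an `n`-tuple with entries in `Φ₀` lies in `T_n(Φ)` iff all its
contractions lie in `T_{n-1}(Φ)`. -/
def IsRootChainAux (Φ : ReducedRootSystem V) : ℕ → List V → Prop
  | 0, _ => False
  | 1, l => ∃ r ∈ rootsZero Φ, l = [r]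
  | n + 2, l => l.length = n + 2 ∧ (∀ r ∈ l, r ∈ rootsZero Φ) ∧
      ∀ j, j + 1 < l.length → IsRootChainAux Φ (n + 1) (contractAt l j)

/-- `l` is a generator of `T_{l.length}(Φ)`. -/
def IsRootChain (Φ : ReducedRootSystem V) (l : List V) : Prop := IsRootChainAux Φ l.length l

open Classical in
/-- Evaluation of a cochain on a chain generator: tuples containing `0` are identified with
the zero chain `0ₙ`, on which any cochain vanishes. -/
noncomputable def chainEv {M : Type} [Zero M] (ω : List V → M) (l : List V) : M :=
  if (0 : V) ∈ l then 0 else ω l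

/-- The coboundary operator `dⁿ` on cochains, `dⁿωⁿ(r₀|⋯|rₙ) = ωⁿ(∂ⁿ[r₀|⋯|rₙ])`. -/
noncomputable def cobd {M : Type} [AddCommGroup M] (ω : List V → M) (l : List V) : M :=
  chainEv ω l.tail
    + (∑ j ∈ Finset.range (l.length - 1), ((-1 : ℤ) ^ (j + 1)) • chainEv ω (contractAt l j))
    - ((-1 : ℤ) ^ (l.length - 1)) • chainEv ω l.dropLast

/-! ### Auxiliary development -/

/-- The `i`-th face of a tuple. -/
def ddFace (l : List V) (i : ℕ) : List V :=
  if i = 0 then l.tail else if i = l.length then l.dropLast else contractAt l (i - 1)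

lemma dd_getD_tail (l : List V) (k : ℕ) : l.tail.getD k 0 = l.getD (k + 1) 0 := by
  simp [List.getD_eq_getElem?_getD, List.getElem?_tail]

lemma dd_getD_dropLast (l : List V) (k : ℕ) :
    l.dropLast.getD k 0 = if k < l.length - 1 then l.getD k 0 else 0 := by
  rw [List.dropLast_eq_take]
  simp only [List.getD_eq_getElem?_getD, List.getElem?_take]
  split_ifs with h
  · rfl
  · rfl

lemma dd_length_contractAt (l : List V) (j : ℕ) (h : j + 1 < l.length) :
    (contractAt l j).length = l.length - 1 := by
  simp [contractAt]; omega


lemma dd_getD_contractAt (l : List V) (j : ℕ) (h : j + 1 < l.length) (k : ℕ) :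
    (contractAt l j).getD k 0 =
      if k < j then l.getD k 0
      else if k = j then l.getD j 0 + l.getD (j + 1) 0
      else if k < l.length - 1 then l.getD (k + 1) 0 else 0 := by
  have hj : (l.take j).length = j := by simp; omega
  rcases lt_trichotomy k j with hk | rfl | hk
  · rw [contractAt, List.getD_append _ _ _ _ (by omega), if_pos hk]
    simp only [List.getD_eq_getElem?_getD, List.getElem?_take, if_pos hk]
  · rw [contractAt, List.getD_append_right _ _ _ _ (by omega)]
    simp [hj]
  · rw [contractAt, List.getD_append_right _ _ _ _ (by omega), hj,
      show k - j = (k - j - 1) + 1 by omega, List.getD_cons_succ]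
    simp only [List.getD_eq_getElem?_getD, List.getElem?_drop,
      show j + 2 + (k - j - 1) = k + 1 by omega]
    rw [if_neg (by omega : ¬ k < j), if_neg (by omega : ¬ k = j)]
    split_ifs with h2
    · rfl
    · rw [List.getElem?_eq_none (by omega)]; rfl

lemma dd_length_face (l : List V) (i : ℕ) (hi : i ≤ l.length) (hL : 1 ≤ l.length) :
    (ddFace l i).length = l.length - 1 := by
  unfold ddFace
  split_ifs with h0 hl
  · simp
  · simp
  · rw [dd_length_contractAt l (i - 1) (by omega)]

lemma dd_getD_face (l : List V) (i : ℕ) (hi : i ≤ l.length) (hL : 1 ≤ l.length) (k : ℕ) :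
    (ddFace l i).getD k 0 =
      if k < l.length - 1 then
        (if k + 1 < i then l.getD k 0
         else if k + 1 = i then l.getD k 0 + l.getD (k + 1) 0
         else l.getD (k + 1) 0)
      else 0 := by
  rcases eq_or_ne i 0 with rfl | h0
  · rw [show ddFace l 0 = l.tail by simp [ddFace], dd_getD_tail]
    split_ifs <;>
      first
        | rfl
        | (exact False.elim (by assumption))
        | (exfalso; omega)
        | (exact List.getD_eq_default _ _ (by omega))
  rcases eq_or_ne i l.length with rfl | hl
  · rw [show ddFace l l.length = l.dropLast by simp [ddFace, h0], dd_getD_dropLast]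
    split_ifs <;> first | rfl | (exfalso; omega)
  · simp only [ddFace, if_neg h0, if_neg hl]
    rw [dd_getD_contractAt l (i - 1) (by omega)]
    split_ifs <;>
      first
        | rfl
        | (exfalso; omega)
        | (congr 1 <;> congr 1 <;> omega)

lemma dd_eq_of_getD (l₁ l₂ : List V) (h : l₁.length = l₂.length)
    (hg : ∀ k, l₁.getD k 0 = l₂.getD k 0) : l₁ = l₂ := by
  refine List.ext_getElem h fun n h₁ h₂ => ?_
  rw [← List.getD_eq_getElem l₁ 0 h₁, ← List.getD_eq_getElem l₂ 0 h₂]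
  exact hg n

lemma dd_zero_mem_iff (l : List V) :
    (0 : V) ∈ l ↔ ∃ k, k < l.length ∧ l.getD k 0 = 0 := by
  rw [List.mem_iff_getElem]
  constructor
  · rintro ⟨n, hn, e⟩
    exact ⟨n, hn, by rw [List.getD_eq_getElem _ _ hn, e]⟩
  · rintro ⟨k, hk, e⟩
    exact ⟨k, hk, by rw [← List.getD_eq_getElem _ _ hk, e]⟩

set_option maxHeartbeats 3200000 in
lemma dd_face_face (l : List V) (i j : ℕ) (hL : 2 ≤ l.length) (hij : i < j)
    (hj : j ≤ l.length) :
    ddFace (ddFace l j) i = ddFace (ddFace l i) (j - 1) := by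
  have hfj := dd_length_face l j hj (by omega)
  have hfi := dd_length_face l i (by omega) (by omega)
  apply dd_eq_of_getD
  · rw [dd_length_face _ i (by omega) (by omega), dd_length_face _ (j-1) (by omega) (by omega),
      hfj, hfi]
  · intro k
    rw [dd_getD_face _ i (by omega) (by omega) k, dd_getD_face _ (j-1) (by omega) (by omega) k]
    rw [hfj, hfi]
    rw [dd_getD_face l j hj (by omega), dd_getD_face l j hj (by omega),
      dd_getD_face l i (by omega) (by omega), dd_getD_face l i (by omega) (by omega)]
    split_ifs <;>
      first
        | rfl
        | (exact False.elim (by assumption))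
        | (exfalso; omega)
        | (congr 1 <;> congr 1 <;> omega)
        | abel

lemma dd_cobd_eq_sum {M : Type} [AddCommGroup M] (ω : List V → M) (l : List V)
    (hL : 1 ≤ l.length) :
    cobd ω l = ∑ i ∈ Finset.range (l.length + 1),
      ((-1 : ℤ) ^ i) • chainEv ω (ddFace l i) := by
  obtain ⟨m, hm⟩ : ∃ m, l.length = m + 1 := ⟨l.length - 1, by omega⟩
  rw [cobd, hm, Finset.sum_range_succ, Finset.sum_range_succ']
  have h0 : ddFace l 0 = l.tail := by simp [ddFace]
  have hlast : ddFace l (m + 1) = l.dropLast := by simp [ddFace, hm]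
  have hmid : ∀ i ∈ Finset.range (m + 1 - 1),
      ((-1 : ℤ) ^ (i + 1)) • chainEv ω (contractAt l i)
        = ((-1 : ℤ) ^ (i + 1)) • chainEv ω (ddFace l (i + 1)) := by
    intro i hi
    simp only [Finset.mem_range] at hi
    have h1 : i + 1 ≠ m + 1 := by omega
    have h2 : i + 1 ≠ 0 := by omega
    simp [ddFace, hm, h1, h2, show i ≠ m by omega]
  rw [Finset.sum_congr rfl hmid, h0, hlast]
  simp only [Nat.add_sub_cancel, pow_zero, one_smul, pow_succ]
  simp only [mul_neg, mul_one, neg_smul]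
  abel

lemma dd_cobd_zero {M : Type} [AddCommGroup M] (ω : List V → M) (l : List V)
    (hL : 2 ≤ l.length) (h0 : (0 : V) ∈ l) : cobd ω l = 0 := by
  obtain ⟨k, hk, hk0⟩ := (dd_zero_mem_iff l).1 h0
  rw [dd_cobd_eq_sum ω l (by omega)]
  have hfe : ddFace l k = ddFace l (k + 1) := by
    apply dd_eq_of_getD
    · rw [dd_length_face _ _ (by omega) (by omega), dd_length_face _ _ (by omega) (by omega)]
    · intro m
      rw [dd_getD_face _ _ (by omega) (by omega), dd_getD_face _ _ (by omega) (by omega)]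
      split_ifs <;>
        first
          | rfl
          | (exfalso; omega)
          | (rw [show m + 1 = k from by omega, hk0, add_zero])
          | (rw [show m = k from by omega, hk0, zero_add])
  have hz : ∀ i, i ≤ l.length → i ≠ k → i ≠ k + 1 → (0 : V) ∈ ddFace l i := by
    intro i hi h1 h2
    rw [dd_zero_mem_iff]
    rcases lt_or_gt_of_ne h1 with hik | hik
    · refine ⟨k - 1, ?_, ?_⟩
      · rw [dd_length_face _ _ hi (by omega)]; omega
      · rw [dd_getD_face _ _ hi (by omega), if_pos (by omega), if_neg (by omega),
          if_neg (by omega), show k - 1 + 1 = k from by omega, hk0]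
    · refine ⟨k, ?_, ?_⟩
      · rw [dd_length_face _ _ hi (by omega)]; omega
      · rw [dd_getD_face _ _ hi (by omega), if_pos (by omega), if_pos (by omega), hk0]
  refine Finset.sum_involution
    (fun i _ => if i = k then k + 1 else if i = k + 1 then k else i) ?_ ?_ ?_ ?_
  · intro i hi
    simp only [Finset.mem_range] at hi
    by_cases e1 : i = k
    · subst e1
      simp only [eq_self_iff_true, if_true]
      rw [hfe, ← add_smul, pow_succ, show ((-1:ℤ)^i + (-1)^i * -1) = 0 from by ring,
        zero_smul]
    · by_cases e2 : i = k + 1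
      · subst e2
        simp only [if_neg e1, eq_self_iff_true, if_true]
        rw [← hfe, ← add_smul, show ((-1:ℤ)^(k+1) + (-1)^k) = 0 from by rw [pow_succ]; ring,
          zero_smul]
      · simp only [if_neg e1, if_neg e2]
        have hc : chainEv ω (ddFace l i) = 0 := by
          rw [chainEv, if_pos (hz i (by omega) e1 e2)]
        rw [hc, smul_zero, add_zero]
  · intro i hi hfi
    simp only [Finset.mem_range] at hi
    by_cases e1 : i = k
    · simp only [if_pos e1]; omega
    · by_cases e2 : i = k + 1
      · simp only [if_neg e1, if_pos e2]; omega
      · exfalso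
        apply hfi
        have hc : chainEv ω (ddFace l i) = 0 := by
          rw [chainEv, if_pos (hz i (by omega) e1 e2)]
        rw [hc, smul_zero]
  · intro i hi
    simp only [Finset.mem_range] at hi ⊢
    split_ifs <;> omega
  · intro i hi
    split_ifs <;> omega


/-- The coboundary operator on root-system cochains with values in a
ℤ-module `M` satisfies `dⁿ⁺¹ ∘ dⁿ = 0` as a map `Cⁿ(Φ,M) → Cⁿ⁺²(Φ,M)`, for every `n ≥ 1`;
that is, `(d(dω))` vanishes on every chain in `T_{n+2}(Φ)`. -/
theorem coboundary_squared_eq_zero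
    {V : Type} [NormedAddCommGroup V] [InnerProductSpace ℝ V] [FiniteDimensional ℝ V]
    (Φ : ReducedRootSystem V) (M : Type) [AddCommGroup M] (n : ℕ) (hn : 1 ≤ n)
    (ω : List V → M) (l : List V) (hlen : l.length = n + 2) (hl : IsRootChain Φ l) :
    cobd (cobd ω) l = 0 := by
  rw [dd_cobd_eq_sum (cobd ω) l (by omega)]
  have hstep : ∀ j ∈ Finset.range (l.length + 1),
      ((-1 : ℤ) ^ j) • chainEv (cobd ω) (ddFace l j)
        = ((-1 : ℤ) ^ j) • ∑ i ∈ Finset.range l.length,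
            ((-1 : ℤ) ^ i) • chainEv ω (ddFace (ddFace l j) i) := by
    intro j hj
    simp only [Finset.mem_range] at hj
    have hfl : (ddFace l j).length = l.length - 1 :=
      dd_length_face l j (by omega) (by omega)
    have hc : chainEv (cobd ω) (ddFace l j) = cobd ω (ddFace l j) := by
      rw [chainEv]
      split_ifs with h
      · exact (dd_cobd_zero ω _ (by omega) h).symm
      · rfl
    rw [hc, dd_cobd_eq_sum ω _ (by omega), hfl,
      show l.length - 1 + 1 = l.length from by omega]
  rw [Finset.sum_congr rfl hstep]
  simp only [Finset.smul_sum, smul_smul]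
  rw [← Finset.sum_product']
  refine Finset.sum_involution
    (fun p _ => if p.2 < p.1 then (p.2, p.1 - 1) else (p.2 + 1, p.1)) ?_ ?_ ?_ ?_
  · rintro ⟨j, i⟩ hp
    simp only [Finset.mem_product, Finset.mem_range] at hp
    by_cases hlt : i < j
    · simp only [if_pos hlt]
      obtain ⟨j', rfl⟩ : ∃ j', j = j' + 1 := ⟨j - 1, by omega⟩
      have hff : ddFace (ddFace l (j' + 1)) i = ddFace (ddFace l i) (j' + 1 - 1) :=
        dd_face_face l i (j' + 1) (by omega) hlt (by omega)
      simp only [Nat.add_sub_cancel] at hff ⊢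
      rw [hff, ← add_smul,
        show ((-1:ℤ)^(j'+1) * (-1)^i + (-1)^i * (-1)^j') = 0 from by rw [pow_succ]; ring,
        zero_smul]
    · simp only [if_neg hlt]
      have hff : ddFace (ddFace l (i + 1)) j = ddFace (ddFace l j) (i + 1 - 1) :=
        dd_face_face l j (i + 1) (by omega) (by omega) (by omega)
      simp only [Nat.add_sub_cancel] at hff
      rw [hff, ← add_smul,
        show ((-1:ℤ)^j * (-1)^i + (-1)^(i+1) * (-1)^j) = 0 from by rw [pow_succ]; ring,
        zero_smul]
  · rintro ⟨j, i⟩ hp hf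
    simp only [Finset.mem_product, Finset.mem_range] at hp
    by_cases hlt : i < j
    · simp only [if_pos hlt]
      intro e
      rw [Prod.mk.injEq] at e
      omega
    · simp only [if_neg hlt]
      intro e
      rw [Prod.mk.injEq] at e
      omega
  · rintro ⟨j, i⟩ hp
    simp only [Finset.mem_product, Finset.mem_range] at hp
    by_cases hlt : i < j
    · simp only [if_pos hlt, Finset.mem_product, Finset.mem_range]
      constructor <;> omega
    · simp only [if_neg hlt, Finset.mem_product, Finset.mem_range]
      constructor <;> omega
  · rintro ⟨j, i⟩ hp
    simp only [Finset.mem_product, Finset.mem_range] at hp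
    by_cases hlt : i < j
    · have h2 : ¬ (j - 1 < i) := by omega
      simp [hlt, h2, Prod.ext_iff]
      omega
    · have h2 : j < i + 1 := by omega
      simp [hlt, h2, Prod.ext_iff]
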